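/- Let q ∈ ℂ with q ≠ 0 and q² ≠ 1, set ω = q − q⁻¹, let m ≥ 1 and let μ₁, …, μ_m ∈ ℂ be pairwise distinct. Define P(X) := ω⁻¹ · (∏_{i=1}^{m} (1 − q⁻² μ_i X) · (∏_{i=1}^{m} (1 − μ_i X))⁻¹ − 1) ∈ ℂ[[X]], where the inverse is taken in the ring of formal power series. Then for every n ≥ 1 the coefficient of Xⁿ in P(X) equals Σ_{i=1}^{m} μ_iⁿ d_i(μ), where d_i(μ) = q⁻¹ ∏_{j≠i} (μ_i − q⁻² μ_j)/(μ_i − μ_j). -/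

import Mathlib

open Finset PowerSeries

/-- Partial fraction decomposition as a polynomial identity. -/
lemma key_poly {ι : Type*} [DecidableEq ι] (a : ℂ) (s : Finset ι) (μ : ι → ℂ)
    (hinj : Set.InjOn μ s) (h0 : ∀ i ∈ s, μ i ≠ 0) :
    (∏ i ∈ s, (1 - Polynomial.C (a * μ i) * Polynomial.X))
      - ∏ i ∈ s, (1 - Polynomial.C (μ i) * Polynomial.X)
    = ∑ i ∈ s, Polynomial.C ((1 - a) * μ i *
        ∏ j ∈ s.erase i, (μ i - a * μ j) / (μ i - μ j)) * Polynomial.X *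
        ∏ j ∈ s.erase i, (1 - Polynomial.C (μ j) * Polynomial.X) := by
  have hdeg1 : ∀ c : ℂ, (1 - Polynomial.C c * Polynomial.X).natDegree ≤ 1 := by
    intro c
    refine (Polynomial.natDegree_sub_le _ _).trans ?_
    simp only [Polynomial.natDegree_one]
    refine max_le (by norm_num) ?_
    exact (Polynomial.natDegree_mul_le).trans (by simp)
  have hproddeg : ∀ (t : Finset ι),
      (∏ i ∈ t, (1 - Polynomial.C (μ i) * Polynomial.X)).natDegree ≤ t.card := by
    intro t
    refine (Polynomial.natDegree_prod_le _ _).trans ?_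
    have := Finset.sum_le_card_nsmul t
      (fun i => (1 - Polynomial.C (μ i) * Polynomial.X).natDegree) 1 (fun i _ => hdeg1 (μ i))
    simpa using this
  rw [← sub_eq_zero]
  set D : Polynomial ℂ :=
    (∏ i ∈ s, (1 - Polynomial.C (a * μ i) * Polynomial.X))
      - (∏ i ∈ s, (1 - Polynomial.C (μ i) * Polynomial.X))
      - ∑ i ∈ s, Polynomial.C ((1 - a) * μ i *
        ∏ j ∈ s.erase i, (μ i - a * μ j) / (μ i - μ j)) * Polynomial.X *
        ∏ j ∈ s.erase i, (1 - Polynomial.C (μ j) * Polynomial.X) with hD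
  have h0im : (0 : ℂ) ∉ s.image fun i => (μ i)⁻¹ := by
    simp only [Finset.mem_image, not_exists]
    rintro i ⟨hi, hinv⟩
    exact h0 i hi (by simpa [eq_comm, _root_.inv_eq_zero] using hinv)
  have hcard : (insert (0:ℂ) (s.image fun i => (μ i)⁻¹)).card = s.card + 1 := by
    rw [Finset.card_insert_of_notMem h0im, Finset.card_image_of_injOn]
    intro x hx y hy hxy
    exact hinj hx hy (inv_injective hxy)
  apply Polynomial.eq_zero_of_natDegree_lt_card_of_eval_eq_zero' D
      (insert (0:ℂ) (s.image fun i => (μ i)⁻¹))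
  · intro x hx
    rcases Finset.mem_insert.mp hx with rfl | hx
    · simp [hD, Polynomial.eval_prod, Polynomial.eval_finset_sum]
    · obtain ⟨i, hi, rfl⟩ := Finset.mem_image.mp hx
      have hμi : μ i ≠ 0 := h0 i hi
      simp only [hD, Polynomial.eval_sub, Polynomial.eval_prod, Polynomial.eval_finset_sum,
        Polynomial.eval_mul, Polynomial.eval_one, Polynomial.eval_C, Polynomial.eval_X]
      have hB : ∏ j ∈ s, (1 - μ j * (μ i)⁻¹) = 0 :=
        Finset.prod_eq_zero hi (by field_simp; ring)
      have hS : ∑ j ∈ s, ((1 - a) * μ j *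
            ∏ k ∈ s.erase j, (μ j - a * μ k) / (μ j - μ k)) * (μ i)⁻¹ *
            ∏ k ∈ s.erase j, (1 - μ k * (μ i)⁻¹)
          = ((1 - a) * μ i *
            ∏ k ∈ s.erase i, (μ i - a * μ k) / (μ i - μ k)) * (μ i)⁻¹ *
            ∏ k ∈ s.erase i, (1 - μ k * (μ i)⁻¹) := by
        refine Finset.sum_eq_single_of_mem i hi ?_
        intro j hj hji
        have : ∏ k ∈ s.erase j, (1 - μ k * (μ i)⁻¹) = 0 :=
          Finset.prod_eq_zero (Finset.mem_erase.mpr ⟨hji.symm, hi⟩) (by field_simp; ring)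
        simp [this]
      rw [hB, hS]
      have hA : ∏ j ∈ s, (1 - a * μ j * (μ i)⁻¹)
          = (1 - a) * ∏ j ∈ s.erase i, (1 - a * μ j * (μ i)⁻¹) := by
        rw [← Finset.mul_prod_erase _ _ hi]
        congr 1
        field_simp
      rw [hA]
      have hcomb : ∏ k ∈ s.erase i, ((μ i - a * μ k) / (μ i - μ k) * (1 - μ k * (μ i)⁻¹))
          = ∏ k ∈ s.erase i, (1 - a * μ k * (μ i)⁻¹) := by
        refine Finset.prod_congr rfl ?_
        intro k hk
        obtain ⟨hki, hks⟩ := Finset.mem_erase.mp hk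
        have hne : μ i - μ k ≠ 0 := by
          intro h
          exact hki (hinj hks hi (by linear_combination -h))
        field_simp
      have hfin : ((1 - a) * μ i * ∏ k ∈ s.erase i, (μ i - a * μ k) / (μ i - μ k)) * (μ i)⁻¹ *
          ∏ k ∈ s.erase i, (1 - μ k * (μ i)⁻¹)
          = (1 - a) * (μ i * (μ i)⁻¹) *
            ∏ k ∈ s.erase i, ((μ i - a * μ k) / (μ i - μ k) * (1 - μ k * (μ i)⁻¹)) := by
        rw [Finset.prod_mul_distrib]; ring
      rw [hfin, hcomb, mul_inv_cancel₀ hμi, mul_one]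
      ring
  · rw [hcard, Nat.lt_succ_iff, hD]
    refine (Polynomial.natDegree_sub_le _ _).trans (max_le ?_ ?_)
    · refine (Polynomial.natDegree_sub_le _ _).trans (max_le ?_ (hproddeg s))
      refine (Polynomial.natDegree_prod_le _ _).trans ?_
      have := Finset.sum_le_card_nsmul s
        (fun i => (1 - Polynomial.C (a * μ i) * Polynomial.X).natDegree) 1
        (fun i _ => hdeg1 (a * μ i))
      simpa using this
    · refine Polynomial.natDegree_sum_le_of_forall_le _ _ ?_
      intro i hi
      refine Polynomial.natDegree_mul_le.trans ?_
      have h1 : (Polynomial.C ((1 - a) * μ i *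
          ∏ j ∈ s.erase i, (μ i - a * μ j) / (μ i - μ j)) * Polynomial.X).natDegree ≤ 1 := by
        refine Polynomial.natDegree_mul_le.trans ?_
        rw [Polynomial.natDegree_C, Polynomial.natDegree_X]
      have h2 := hproddeg (s.erase i)
      have h3 : (s.erase i).card + 1 = s.card := by
        rw [Finset.card_erase_of_mem hi]
        exact Nat.succ_pred_eq_of_pos (Finset.card_pos.mpr ⟨i, hi⟩)
      omega

/-- spectral parameterization of the power sums of the first kind:
the `n`-th coefficient of `P(X) = ω⁻¹·(∏(1−q⁻²μᵢX)·(∏(1−μᵢX))⁻¹ − 1)` equals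
`Σᵢ μᵢⁿ dᵢ(μ)` with `dᵢ(μ) = q⁻¹ ∏_{j≠i} (μᵢ − q⁻²μⱼ)/(μᵢ − μⱼ)`. -/
theorem stmt_6 (q : ℂ) (hq : q ≠ 0) (hq2 : q ^ 2 ≠ 1) (ω : ℂ) (hω : ω = q - q⁻¹)
    (m : ℕ) (hm : 1 ≤ m) (μ : Fin m → ℂ) (hμ : Function.Injective μ)
    (P : PowerSeries ℂ)
    (hP : P = C ω⁻¹ *
      ((∏ i, (1 - C (q⁻¹ ^ 2 * μ i) * X)) * (∏ i, (1 - C (μ i) * X))⁻¹ - 1)) :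
    ∀ n : ℕ, 1 ≤ n →
      coeff n P = ∑ i, μ i ^ n *
        (q⁻¹ * ∏ j ∈ univ.erase i, (μ i - q⁻¹ ^ 2 * μ j) / (μ i - μ j)) := by
  classical
  set a : ℂ := q⁻¹ ^ 2 with ha
  have hω0 : ω ≠ 0 := by
    rw [hω]
    intro h
    apply hq2
    have : q * (q - q⁻¹) = 0 := by rw [h, mul_zero]
    field_simp at this
    linear_combination this
  set s : Finset (Fin m) := univ.filter (fun i => μ i ≠ 0) with hs
  have hmem_s : ∀ i, i ∈ s ↔ μ i ≠ 0 := by intro i; simp [hs]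
  -- the power-series partial fraction identity over s
  have key := key_poly a s μ (hμ.injOn) (fun i hi => (hmem_s i).mp hi)
  -- cast to power series
  have keyPS :
      (∏ i ∈ s, (1 - C (a * μ i) * X)) - ∏ i ∈ s, (1 - C (μ i) * X)
      = ∑ i ∈ s, C ((1 - a) * μ i *
          ∏ j ∈ s.erase i, (μ i - a * μ j) / (μ i - μ j)) * X *
          ∏ j ∈ s.erase i, (1 - C (μ j) * X) := by
    have := congrArg (Polynomial.coeToPowerSeries.ringHom (R := ℂ)) key
    simpa [map_sub, map_prod, map_sum, map_mul, map_one,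
      Polynomial.coeToPowerSeries.ringHom_apply, Polynomial.coe_C, Polynomial.coe_X] using this
  -- extend products from s to univ
  have hprodA : ∏ i, (1 - C (q⁻¹ ^ 2 * μ i) * X) = ∏ i ∈ s, (1 - C (a * μ i) * X) := by
    refine (Finset.prod_subset (Finset.subset_univ s) ?_).symm
    intro i _ hi
    have : μ i = 0 := by simpa [hmem_s] using hi
    simp [this]
  have hprodB : ∏ i, (1 - C (μ i) * X) = ∏ i ∈ s, (1 - C (μ i) * X) := by
    refine (Finset.prod_subset (Finset.subset_univ s) ?_).symm
    intro i _ hi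
    have : μ i = 0 := by simpa [hmem_s] using hi
    simp [this]
  set B : PowerSeries ℂ := ∏ i ∈ s, (1 - C (μ i) * X) with hB
  have hBunit : constantCoeff B ≠ 0 := by
    rw [hB, map_prod]
    simp
  have hBinv : B * B⁻¹ = 1 := PowerSeries.mul_inv_cancel B hBunit
  have hB0 : B ≠ 0 := by
    intro h
    rw [h, map_zero] at hBunit
    exact hBunit rfl
  -- geometric series
  have hgeom : ∀ c : ℂ, (1 - C c * X) * PowerSeries.mk (fun k => c ^ k) = 1 := by
    intro c
    ext n
    cases n with
    | zero => simp
    | succ k =>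
      simp only [sub_mul, one_mul, map_sub, mul_assoc]
      rw [PowerSeries.coeff_C_mul, PowerSeries.coeff_succ_X_mul, PowerSeries.coeff_mk,
        PowerSeries.coeff_mk]
      simp [pow_succ, mul_comm]
  -- P * B = (C ω⁻¹ * Σ ...) * B
  have hPB : P * B = (C ω⁻¹ * ∑ i ∈ s, C ((1 - a) * μ i *
      ∏ j ∈ s.erase i, (μ i - a * μ j) / (μ i - μ j)) * X *
      PowerSeries.mk (fun k => μ i ^ k)) * B := by
    rw [hP, hprodA, hprodB]
    have hBinv' : B⁻¹ * B = 1 := by rw [mul_comm]; exact hBinv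
    have lhs_eq : C ω⁻¹ * ((∏ i ∈ s, (1 - C (a * μ i) * X)) * B⁻¹ - 1) * B
        = C ω⁻¹ * ((∏ i ∈ s, (1 - C (a * μ i) * X)) - B) :=
      calc C ω⁻¹ * ((∏ i ∈ s, (1 - C (a * μ i) * X)) * B⁻¹ - 1) * B
          = C ω⁻¹ * ((∏ i ∈ s, (1 - C (a * μ i) * X)) * (B⁻¹ * B) - B) := by ring
        _ = C ω⁻¹ * ((∏ i ∈ s, (1 - C (a * μ i) * X)) - B) := by
            rw [hBinv', mul_one]
    rw [lhs_eq, keyPS, mul_assoc, Finset.sum_mul]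
    congr 1
    refine Finset.sum_congr rfl ?_
    intro i hi
    have hmkB : PowerSeries.mk (fun k => μ i ^ k) * B
        = ∏ j ∈ s.erase i, (1 - C (μ j) * X) := by
      rw [hB, ← Finset.mul_prod_erase _ _ hi, ← mul_assoc, mul_comm (PowerSeries.mk _),
        hgeom, one_mul]
    rw [← hmkB]
    ring
  have hPeq : P = C ω⁻¹ * ∑ i ∈ s, C ((1 - a) * μ i *
      ∏ j ∈ s.erase i, (μ i - a * μ j) / (μ i - μ j)) * X *
      PowerSeries.mk (fun k => μ i ^ k) := mul_right_cancel₀ hB0 hPB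
  intro n hn
  obtain ⟨k, rfl⟩ : ∃ k, n = k + 1 := ⟨n - 1, by omega⟩
  rw [hPeq, PowerSeries.coeff_C_mul, map_sum]
  have hcoeff : ∀ i ∈ s, (coeff (k+1)) (C ((1 - a) * μ i *
      ∏ j ∈ s.erase i, (μ i - a * μ j) / (μ i - μ j)) * X *
      PowerSeries.mk (fun k => μ i ^ k))
      = ((1 - a) * μ i * ∏ j ∈ s.erase i, (μ i - a * μ j) / (μ i - μ j)) * μ i ^ k := by
    intro i _
    rw [mul_assoc, PowerSeries.coeff_C_mul, PowerSeries.coeff_succ_X_mul, PowerSeries.coeff_mk]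
  rw [Finset.sum_congr rfl hcoeff]
  -- now pure algebra over ℂ
  rw [Finset.mul_sum]
  have hsum : ∑ i, μ i ^ (k+1) * (q⁻¹ * ∏ j ∈ univ.erase i, (μ i - q⁻¹ ^ 2 * μ j) / (μ i - μ j))
      = ∑ i ∈ s, μ i ^ (k+1) * (q⁻¹ * ∏ j ∈ univ.erase i, (μ i - a * μ j) / (μ i - μ j)) := by
    refine (Finset.sum_subset (Finset.subset_univ s) ?_).symm
    intro i _ hi
    have : μ i = 0 := by simpa [hmem_s] using hi
    simp [this]
  rw [hsum]
  refine Finset.sum_congr rfl ?_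
  intro i hi
  have hμi : μ i ≠ 0 := (hmem_s i).mp hi
  have hprod_eq : ∏ j ∈ s.erase i, (μ i - a * μ j) / (μ i - μ j)
      = ∏ j ∈ univ.erase i, (μ i - a * μ j) / (μ i - μ j) := by
    refine Finset.prod_subset (Finset.erase_subset_erase _ (Finset.subset_univ s)) ?_
    intro j hj hjs
    have hji : j ≠ i := (Finset.mem_erase.mp hj).1
    have hjz : μ j = 0 := by
      by_contra h
      exact hjs (Finset.mem_erase.mpr ⟨hji, (hmem_s j).mpr h⟩)
    rw [hjz]
    field_simp
    simp
  have hωa : ω⁻¹ * (1 - a) = q⁻¹ := by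
    have h1a : (1 : ℂ) - a = q⁻¹ * ω := by
      rw [hω, ha]
      field_simp
    rw [h1a]
    calc ω⁻¹ * (q⁻¹ * ω) = q⁻¹ * (ω * ω⁻¹) := by ring
      _ = q⁻¹ := by rw [mul_inv_cancel₀ hω0, mul_one]
  rw [hprod_eq, ← hωa]
  ring
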